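/- Let G be a simple graph on 2n vertices (n ≥ 1) that is triangle-free and has exactly n² edges. Then G is isomorphic to the complete bipartite graph K_{n,n}. -/

import Mathlib

open Finset SimpleGraph

lemma range_parity_card (n r : ℕ) :
    ((Finset.range (2 * n)).filter (fun w => ¬ w % 2 = r % 2)).card = n := by
  induction n with
  | zero => simp
  | succ n ih =>
    have h : 2 * (n + 1) = (2 * n + 1) + 1 := by ring
    rw [h, Finset.range_add_one, Finset.filter_insert, Finset.range_add_one, Finset.filter_insert]
    rcases Nat.even_or_odd r with hr | hr
    · have h0 : r % 2 = 0 := Nat.even_iff.mp hr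
      rw [if_pos (by omega), if_neg (by omega), Finset.card_insert_of_notMem (by simp), ih]
    · have h0 : r % 2 = 1 := Nat.odd_iff.mp hr
      rw [if_neg (by omega), if_pos (by omega), Finset.card_insert_of_notMem (by simp), ih]

lemma turan_degree (n : ℕ) (v : Fin (2 * n)) : (turanGraph (2 * n) 2).degree v = n := by
  rw [SimpleGraph.degree, neighborFinset_eq_filter]
  have key : #(Finset.univ.filter (fun w => (turanGraph (2 * n) 2).Adj v w)) =
      #((Finset.range (2 * n)).filter (fun w => ¬ w % 2 = (v : ℕ) % 2)) := by
    rw [← Nat.Iio_eq_range, ← Fin.map_valEmbedding_univ, Finset.filter_map, Finset.card_map]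
    congr 1
    apply Finset.filter_congr
    intro w _
    simp [turanGraph, eq_comm]
  rw [key, range_parity_card]

lemma turan_card (n : ℕ) : (turanGraph (2 * n) 2).edgeFinset.card = n ^ 2 := by
  have h := SimpleGraph.sum_degrees_eq_twice_card_edges (turanGraph (2 * n) 2)
  simp only [turan_degree] at h
  rw [Finset.sum_const, Finset.card_univ, Fintype.card_fin, smul_eq_mul] at h
  have : 2 * (n ^ 2) = 2 * (turanGraph (2 * n) 2).edgeFinset.card := by
    rw [← h]; ring
  omega

/-- The interleaving equivalence `Fin n ⊕ Fin n ≃ Fin (2 * n)`. -/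
def interleave (n : ℕ) : Fin n ⊕ Fin n ≃ Fin (2 * n) where
  toFun := Sum.elim (fun i => ⟨2 * i, by have := i.isLt; omega⟩)
    (fun i => ⟨2 * i + 1, by have := i.isLt; omega⟩)
  invFun v := if v.val % 2 = 0 then Sum.inl ⟨v.val / 2, by have := v.isLt; omega⟩
    else Sum.inr ⟨v.val / 2, by have := v.isLt; omega⟩
  left_inv := by
    rintro (i | i) <;> simp only [Sum.elim_inl, Sum.elim_inr]
    · simp only [show 2 * (i : ℕ) % 2 = 0 by omega, ↓reduceIte]
      congr 1
      exact Fin.ext (by simp)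
    · simp only [show (2 * (i : ℕ) + 1) % 2 ≠ 0 by omega, ↓reduceIte]
      congr 1
      exact Fin.ext (by simp; omega)
  right_inv v := by
    dsimp only
    split_ifs with h <;> exact Fin.ext (by simp; omega)

/-- The interleaving isomorphism between `K_{n,n}` and the Turán graph `T(2n, 2)`. -/
def bipIso (n : ℕ) : completeBipartiteGraph (Fin n) (Fin n) ≃g turanGraph (2 * n) 2 where
  toEquiv := interleave n
  map_rel_iff' := by
    rintro (a | a) (b | b) <;>
      simp [interleave, turanGraph, completeBipartiteGraph] <;> omega

/-- Equality case of Mantel's theorem: a triangle-free simple graph on `2n`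
vertices with `n²` edges is isomorphic to `K_{n,n}`. -/
theorem stmt_11 (n : ℕ) (hn : 1 ≤ n) (G : SimpleGraph (Fin (2 * n)))
    [DecidableRel G.Adj] (htf : G.CliqueFree 3)
    (hcard : G.edgeFinset.card = n ^ 2) :
    Nonempty (G ≃g completeBipartiteGraph (Fin n) (Fin n)) := by
  have itm : G.IsTuranMaximal 2 := by
    refine ⟨htf, fun H _ cf => ?_⟩
    have h := (isTuranMaximal_turanGraph (n := 2 * n) two_pos).2 (G' := H) cf
    rwa [turan_card, ← hcard] at h
  obtain ⟨f⟩ := itm.nonempty_iso_turanGraph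
  rw [Fintype.card_fin] at f
  exact ⟨f.trans (bipIso n).symm⟩
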